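/- Let B be an integral domain containing a field k of characteristic zero, and let D be a nonzero locally nilpotent derivation of B. Then the kernel A = ker(D) is factorially closed in B: if a, b ∈ B are nonzero and ab ∈ A, then a ∈ A and b ∈ A. -/
import Mathlib


variable {k B : Type*} [Field k] [CharZero k] [CommRing B] [IsDomain B] [Algebra k B]

/-- A derivation is locally nilpotent if every element is killed by some iterate. -/
def IsLocallyNilpotentDeriv {R A : Type*} [CommRing R] [CommRing A] [Algebra R A]
    (D : Derivation R A A) : Prop :=
  ∀ x : A, ∃ n : ℕ, (⇑D)^[n] x = 0

/-- The kernel of a derivation, as a subalgebra. -/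
def Derivation.kerSubalgebra {R A : Type*} [CommRing R] [CommRing A] [Algebra R A]
    (D : Derivation R A A) : Subalgebra R A where
  carrier := {b | D b = 0}
  mul_mem' := by
    intro a b ha hb
    simp only [Set.mem_setOf_eq] at *
    rw [D.leibniz]
    simp [ha, hb]
  add_mem' := by
    intro a b ha hb
    simp only [Set.mem_setOf_eq] at *
    simp [ha, hb]
  algebraMap_mem' := by intro r; simp [Set.mem_setOf_eq]

theorem leibniz_iter (D : Derivation k B B) (n : ℕ) (a b : B) :
    (⇑D)^[n] (a * b) =
      ∑ i ∈ Finset.range (n+1), (n.choose i) • ((⇑D)^[i] a * (⇑D)^[n-i] b) := by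
  induction n with
  | zero => simp
  | succ n ih =>
    rw [Function.iterate_succ_apply', ih, map_sum]
    have h1 : ∀ i : ℕ, D ((n.choose i) • ((⇑D)^[i] a * (⇑D)^[n-i] b)) =
        (n.choose i) • ((⇑D)^[i+1] a * (⇑D)^[n-i] b)
        + (n.choose i) • ((⇑D)^[i] a * (⇑D)^[n-i+1] b) := by
      intro i
      rw [map_nsmul, Derivation.leibniz, Function.iterate_succ_apply', Function.iterate_succ_apply',
        smul_add]
      simp only [smul_eq_mul]
      ring_nf
    simp only [h1]
    rw [Finset.sum_add_distrib]
    rw [Finset.sum_range_succ' (fun i => ((n+1).choose i) • ((⇑D)^[i] a * (⇑D)^[n+1-i] b)) (n+1)]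
    simp only [Nat.choose_succ_succ, add_smul, Nat.succ_sub_succ, Nat.choose_zero_right,
      Nat.sub_zero, one_smul]
    rw [Finset.sum_add_distrib]
    have h2 : ∑ i ∈ Finset.range (n+1), n.choose (i+1) • ((⇑D)^[i+1] a * (⇑D)^[n-i] b)
        + (⇑D)^[0] a * (⇑D)^[n+1] b
        = ∑ i ∈ Finset.range (n+1), n.choose i • ((⇑D)^[i] a * (⇑D)^[n-i+1] b) := by
      have := Finset.sum_range_succ' (fun i => (n.choose i) • ((⇑D)^[i] a * (⇑D)^[n+1-i] b)) (n+1)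
      simp only [Nat.succ_sub_succ, Nat.choose_zero_right, Nat.sub_zero, one_smul] at this
      rw [← this, Finset.sum_range_succ]
      simp only [Nat.choose_succ_self, zero_smul, add_zero]
      apply Finset.sum_congr rfl
      intro i hi
      rw [Finset.mem_range] at hi
      have h3 : n + 1 - i = n - i + 1 := by omega
      rw [h3]
    rw [add_assoc, h2]

theorem iter_zero (D : Derivation k B B) (m : ℕ) : (⇑D)^[m] (0:B) = 0 :=
  Function.iterate_fixed (map_zero D) m

theorem iter_ge (D : Derivation k B B) {x : B} {m : ℕ} (h : (⇑D)^[m] x = 0)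
    {i : ℕ} (hi : m ≤ i) : (⇑D)^[i] x = 0 := by
  obtain ⟨j, rfl⟩ := Nat.exists_eq_add_of_le hi
  rw [Nat.add_comm, Function.iterate_add_apply, h, iter_zero]

/-- The kernel of a nonzero locally nilpotent derivation of a domain is factorially closed. -/
theorem kernel_factorially_closed (D : Derivation k B B) (hD : D ≠ 0)
    (hLND : IsLocallyNilpotentDeriv D) :
    ∀ a b : B, a ≠ 0 → b ≠ 0 → D (a * b) = 0 → D a = 0 ∧ D b = 0 := by
  classical
  haveI : CharZero B := charZero_of_injective_algebraMap (algebraMap k B).injective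
  intro a b ha hb hab
  -- degrees
  obtain ⟨ma, hma⟩ := hLND a
  obtain ⟨mb, hmb⟩ := hLND b
  have hPa : ∃ n, (⇑D)^[n] a = 0 := ⟨ma, hma⟩
  have hPb : ∃ n, (⇑D)^[n] b = 0 := ⟨mb, hmb⟩
  set na := Nat.find hPa with hna
  set nb := Nat.find hPb with hnb
  have hna0 : (⇑D)^[na] a = 0 := Nat.find_spec hPa
  have hnb0 : (⇑D)^[nb] b = 0 := Nat.find_spec hPb
  have hna1 : 1 ≤ na := by
    by_contra h
    push_neg at h
    interval_cases na
    · exact ha hna0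
  have hnb1 : 1 ≤ nb := by
    by_contra h
    push_neg at h
    interval_cases nb
    · exact hb hnb0
  set M := na - 1 with hM
  set N := nb - 1 with hN
  have hMne : (⇑D)^[M] a ≠ 0 := Nat.find_min hPa (by omega)
  have hNne : (⇑D)^[N] b ≠ 0 := Nat.find_min hPb (by omega)
  have hM0 : (⇑D)^[M+1] a = 0 := by rw [hM]; rwa [Nat.sub_add_cancel hna1]
  have hN0 : (⇑D)^[N+1] b = 0 := by rw [hN]; rwa [Nat.sub_add_cancel hnb1]
  -- iterate of ab is zero for t ≥ 1
  have hiter : ∀ t, 1 ≤ t → (⇑D)^[t] (a*b) = 0 := by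
    intro t ht
    obtain ⟨s, rfl⟩ := Nat.exists_eq_add_of_le ht
    rw [Nat.add_comm, Function.iterate_add_apply, Function.iterate_one, hab, iter_zero]
  -- key computation
  have hkey : (⇑D)^[M+N] (a*b) = ((M+N).choose M) • ((⇑D)^[M] a * (⇑D)^[N] b) := by
    rw [leibniz_iter]
    rw [Finset.sum_eq_single M]
    · congr 1; congr 2; omega
    · intro i hi hne
      rw [Finset.mem_range] at hi
      rcases lt_or_gt_of_ne hne with h | h
      · have : (⇑D)^[M+N-i] b = 0 := iter_ge D hN0 (by omega)
        rw [this, mul_zero, smul_zero]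
      · have : (⇑D)^[i] a = 0 := iter_ge D hM0 (by omega)
        rw [this, zero_mul, smul_zero]
    · intro h
      rw [Finset.mem_range] at h
      omega
  have hMN : M + N = 0 := by
    by_contra h
    have h1 : (⇑D)^[M+N] (a*b) = 0 := hiter _ (by omega)
    rw [hkey] at h1
    have hc : ((M+N).choose M : B) ≠ 0 := by
      have h0 : 0 < (M+N).choose M := Nat.choose_pos (by omega)
      exact Nat.cast_ne_zero.mpr h0.ne'
    rw [nsmul_eq_mul] at h1
    exact (mul_ne_zero hc (mul_ne_zero hMne hNne)) h1
  constructor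
  · have : M = 0 := by omega
    have := hM0
    rw [‹M = 0›] at this
    simpa using this
  · have : N = 0 := by omega
    have := hN0
    rw [‹N = 0›] at this
    simpa using this
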